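/- Let L : ℝⁿ → [0, ∞] be a lower semi-continuous convex function with L(0) = 0 and L(x) > 0 for all x ≠ 0, finite in some neighborhood of the origin, let u : Ω → ℝⁿ be a measurable function on a measurable space (Ω, 𝔐), and define S(λ) = ‖u‖_{L(λ)} on the set of probability measures λ on (Ω, 𝔐). Then S is quasi-concave: for probability measures λ₁, λ₂ and t₁, t₂ ≥ 0 with t₁ + t₂ = 1, S(t₁λ₁ + t₂λ₂) ≥ min{S(λ₁), S(λ₂)}. Moreover, if L is positively homogeneous of order p ≥ 1 (L(rx) = r^p L(x) for all r ≥ 0, x ∈ ℝⁿ), then S is concave: S(t₁λ₁ + t₂λ₂) ≥ t₁·S(λ₁) + t₂·S(λ₂). -/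

import Mathlib

open MeasureTheory
open scoped ENNReal

/-- Convexity for an `[0, ∞]`-valued function on `ℝⁿ`. -/
def ConvexE {n : ℕ} (L : EuclideanSpace ℝ (Fin n) → ℝ≥0∞) : Prop :=
  ∀ x y : EuclideanSpace ℝ (Fin n), ∀ a b : ℝ, 0 ≤ a → 0 ≤ b → a + b = 1 →
    L (a • x + b • y) ≤ ENNReal.ofReal a * L x + ENNReal.ofReal b * L y

/-- The Luxemburg pseudo-norm `‖u‖_{L(λ)} = inf{r > 0 : ∫ L(u/r) dλ ≤ 1}` (equal to `∞`
when no such `r` exists). -/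
noncomputable def lux {n : ℕ} {Ω : Type*} [MeasurableSpace Ω] (μ : Measure Ω)
    (L : EuclideanSpace ℝ (Fin n) → ℝ≥0∞) (u : Ω → EuclideanSpace ℝ (Fin n)) : ℝ≥0∞ :=
  sInf (ENNReal.ofReal '' {r : ℝ | 0 < r ∧ ∫⁻ ω, L (r⁻¹ • u ω) ∂μ ≤ 1})

lemma aux_rpow_ne_zero {r p : ℝ} (hr : 0 < r) (hp0 : 0 < p) :
    ENNReal.ofReal r ^ p ≠ 0 := by
  simp [ENNReal.rpow_eq_zero_iff, (ENNReal.ofReal_pos.mpr hr).ne', ENNReal.ofReal_ne_top,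
    hp0.not_gt, hr.not_ge]

lemma aux_rpow_ne_top {r p : ℝ} (hr : 0 < r) (hp0 : 0 < p) :
    ENNReal.ofReal r ^ p ≠ ⊤ := by
  simp [ENNReal.rpow_eq_top_iff, ENNReal.ofReal_ne_top, hp0.not_gt, hr.not_ge]

lemma aux_ofReal_inv_rpow {r p : ℝ} (hr : 0 < r) :
    ENNReal.ofReal (r⁻¹ ^ p) = (ENNReal.ofReal r ^ p)⁻¹ := by
  rw [Real.inv_rpow hr.le, ENNReal.ofReal_inv_of_pos (Real.rpow_pos_of_pos hr p),
    ENNReal.ofReal_rpow_of_pos hr]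

/-- For a `p`-homogeneous `L`, the Luxemburg norm is bounded by `(∫ L(u))^{1/p}`. -/
lemma lux_le_rpow_lintegral {n : ℕ} {Ω : Type*} [MeasurableSpace Ω] (μ : Measure Ω)
    (L : EuclideanSpace ℝ (Fin n) → ℝ≥0∞) (u : Ω → EuclideanSpace ℝ (Fin n))
    {p : ℝ} (hp : 1 ≤ p)
    (hhom : ∀ r : ℝ, 0 ≤ r → ∀ x, L (r • x) = ENNReal.ofReal (r ^ p) * L x) :
    lux μ L u ≤ (∫⁻ ω, L (u ω) ∂μ) ^ p⁻¹ := by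
  have hp0 : (0:ℝ) < p := lt_of_lt_of_le one_pos hp
  set I : ℝ≥0∞ := ∫⁻ ω, L (u ω) ∂μ with hI
  refine le_of_forall_gt_imp_ge_of_dense fun s hs => ?_
  obtain ⟨r, hr0, h1, h2⟩ := ENNReal.lt_iff_exists_real_btwn.mp hs
  have hr : 0 < r := ENNReal.ofReal_pos.mp (lt_of_le_of_lt (zero_le (a := I ^ p⁻¹)) h1)
  have hne0 := aux_rpow_ne_zero hr hp0
  have hnetop := aux_rpow_ne_top hr hp0
  have hint : ∫⁻ ω, L (r⁻¹ • u ω) ∂μ = (ENNReal.ofReal r ^ p)⁻¹ * I := by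
    have hcongr : ∀ ω, L (r⁻¹ • u ω) = ENNReal.ofReal (r⁻¹ ^ p) * L (u ω) :=
      fun ω => hhom r⁻¹ (inv_nonneg.mpr hr.le) _
    simp only [hcongr, aux_ofReal_inv_rpow hr]
    exact lintegral_const_mul' _ _ (ENNReal.inv_ne_top.mpr hne0)
  have hIle : I ≤ ENNReal.ofReal r ^ p := by
    have := ENNReal.rpow_le_rpow h1.le hp0.le
    rwa [ENNReal.rpow_inv_rpow hp0.ne'] at this
  have hmem : ENNReal.ofReal r ∈
      ENNReal.ofReal '' {r : ℝ | 0 < r ∧ ∫⁻ ω, L (r⁻¹ • u ω) ∂μ ≤ 1} := by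
    refine ⟨r, ⟨hr, ?_⟩, rfl⟩
    rw [hint]
    calc (ENNReal.ofReal r ^ p)⁻¹ * I ≤ (ENNReal.ofReal r ^ p)⁻¹ * (ENNReal.ofReal r ^ p) :=
          mul_le_mul_right hIle _
      _ = 1 := ENNReal.inv_mul_cancel hne0 hnetop
  exact le_trans (sInf_le hmem) h2.le

theorem stmt19 {n : ℕ} {Ω : Type*} [MeasurableSpace Ω]
    (L : EuclideanSpace ℝ (Fin n) → ℝ≥0∞)
    (hconv : ConvexE L) (hlsc : LowerSemicontinuous L) (h0 : L 0 = 0)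
    (hpos : ∀ x, x ≠ 0 → 0 < L x)
    (hfin : ∃ δ : ℝ, 0 < δ ∧ ∀ x : EuclideanSpace ℝ (Fin n), ‖x‖ < δ → L x ≠ ⊤)
    (u : Ω → EuclideanSpace ℝ (Fin n)) (hu : Measurable u) :
    (∀ lam1 lam2 : Measure Ω, IsProbabilityMeasure lam1 → IsProbabilityMeasure lam2 →
      ∀ t1 t2 : ℝ, 0 ≤ t1 → 0 ≤ t2 → t1 + t2 = 1 →
        min (lux lam1 L u) (lux lam2 L u) ≤
          lux (ENNReal.ofReal t1 • lam1 + ENNReal.ofReal t2 • lam2) L u) ∧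
    (∀ p : ℝ, 1 ≤ p →
      (∀ r : ℝ, 0 ≤ r → ∀ x, L (r • x) = ENNReal.ofReal (r ^ p) * L x) →
      ∀ lam1 lam2 : Measure Ω, IsProbabilityMeasure lam1 → IsProbabilityMeasure lam2 →
      ∀ t1 t2 : ℝ, 0 ≤ t1 → 0 ≤ t2 → t1 + t2 = 1 →
        ENNReal.ofReal t1 * lux lam1 L u + ENNReal.ofReal t2 * lux lam2 L u ≤
          lux (ENNReal.ofReal t1 • lam1 + ENNReal.ofReal t2 • lam2) L u) := by
  constructor
  · -- quasi-concavity
    intro lam1 lam2 _ _ t1 t2 ht1 ht2 ht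
    have hw : ENNReal.ofReal t1 + ENNReal.ofReal t2 = 1 := by
      rw [← ENNReal.ofReal_add ht1 ht2, ht, ENNReal.ofReal_one]
    refine le_sInf ?_
    rintro b ⟨r, ⟨hr, hint⟩, rfl⟩
    set A := ∫⁻ ω, L (r⁻¹ • u ω) ∂lam1 with hA
    set B := ∫⁻ ω, L (r⁻¹ • u ω) ∂lam2 with hB
    have hsplit : (∫⁻ ω, L (r⁻¹ • u ω) ∂(ENNReal.ofReal t1 • lam1 + ENNReal.ofReal t2 • lam2))
        = ENNReal.ofReal t1 * A + ENNReal.ofReal t2 * B := by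
      rw [lintegral_add_measure, lintegral_smul_measure, lintegral_smul_measure, smul_eq_mul,
        smul_eq_mul]
    rw [hsplit] at hint
    have hminle : min A B ≤ 1 := by
      calc min A B = (ENNReal.ofReal t1 + ENNReal.ofReal t2) * min A B := by rw [hw, one_mul]
        _ = ENNReal.ofReal t1 * min A B + ENNReal.ofReal t2 * min A B := by ring
        _ ≤ ENNReal.ofReal t1 * A + ENNReal.ofReal t2 * B :=
            add_le_add (mul_le_mul_right (min_le_left _ _) _)
              (mul_le_mul_right (min_le_right _ _) _)
        _ ≤ 1 := hint
    rcases min_le_iff.mp hminle with h | h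
    · exact le_trans (min_le_left _ _) (sInf_le ⟨r, ⟨hr, h⟩, rfl⟩)
    · exact le_trans (min_le_right _ _) (sInf_le ⟨r, ⟨hr, h⟩, rfl⟩)
  · -- concavity for homogeneous L
    intro p hp hhom lam1 lam2 _ _ t1 t2 ht1 ht2 ht
    have hp0 : (0:ℝ) < p := lt_of_lt_of_le one_pos hp
    have hw : ENNReal.ofReal t1 + ENNReal.ofReal t2 = 1 := by
      rw [← ENNReal.ofReal_add ht1 ht2, ht, ENNReal.ofReal_one]
    set I1 : ℝ≥0∞ := ∫⁻ ω, L (u ω) ∂lam1 with hI1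
    set I2 : ℝ≥0∞ := ∫⁻ ω, L (u ω) ∂lam2 with hI2
    refine le_sInf ?_
    rintro b ⟨r, ⟨hr, hint⟩, rfl⟩
    have hne0 := aux_rpow_ne_zero hr hp0
    have hnetop := aux_rpow_ne_top hr hp0
    have hcongr : ∀ ω, L (r⁻¹ • u ω) = ENNReal.ofReal (r⁻¹ ^ p) * L (u ω) :=
      fun ω => hhom r⁻¹ (inv_nonneg.mpr hr.le) _
    have hmul1 : ∫⁻ ω, L (r⁻¹ • u ω) ∂lam1 = (ENNReal.ofReal r ^ p)⁻¹ * I1 := by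
      simp only [hcongr, aux_ofReal_inv_rpow hr]
      exact lintegral_const_mul' _ _ (ENNReal.inv_ne_top.mpr hne0)
    have hmul2 : ∫⁻ ω, L (r⁻¹ • u ω) ∂lam2 = (ENNReal.ofReal r ^ p)⁻¹ * I2 := by
      simp only [hcongr, aux_ofReal_inv_rpow hr]
      exact lintegral_const_mul' _ _ (ENNReal.inv_ne_top.mpr hne0)
    have hsplit : (∫⁻ ω, L (r⁻¹ • u ω) ∂(ENNReal.ofReal t1 • lam1 + ENNReal.ofReal t2 • lam2))
        = (ENNReal.ofReal r ^ p)⁻¹ * (ENNReal.ofReal t1 * I1 + ENNReal.ofReal t2 * I2) := by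
      rw [lintegral_add_measure, lintegral_smul_measure, lintegral_smul_measure, hmul1, hmul2]
      ring
    rw [hsplit] at hint
    have hIle : ENNReal.ofReal t1 * I1 + ENNReal.ofReal t2 * I2 ≤ ENNReal.ofReal r ^ p := by
      have := mul_le_mul_right hint (ENNReal.ofReal r ^ p)
      rwa [← mul_assoc, ENNReal.mul_inv_cancel hne0 hnetop, one_mul, mul_one] at this
    have hmean := ENNReal.rpow_arith_mean_le_arith_mean2_rpow (ENNReal.ofReal t1)
      (ENNReal.ofReal t2) (I1 ^ p⁻¹) (I2 ^ p⁻¹) hw hp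
    rw [ENNReal.rpow_inv_rpow hp0.ne', ENNReal.rpow_inv_rpow hp0.ne'] at hmean
    calc ENNReal.ofReal t1 * lux lam1 L u + ENNReal.ofReal t2 * lux lam2 L u
        ≤ ENNReal.ofReal t1 * I1 ^ p⁻¹ + ENNReal.ofReal t2 * I2 ^ p⁻¹ :=
          add_le_add (mul_le_mul_right (lux_le_rpow_lintegral lam1 L u hp hhom) _)
            (mul_le_mul_right (lux_le_rpow_lintegral lam2 L u hp hhom) _)
      _ = ((ENNReal.ofReal t1 * I1 ^ p⁻¹ + ENNReal.ofReal t2 * I2 ^ p⁻¹) ^ p) ^ p⁻¹ := by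
          rw [ENNReal.rpow_rpow_inv hp0.ne']
      _ ≤ (ENNReal.ofReal t1 * I1 + ENNReal.ofReal t2 * I2) ^ p⁻¹ :=
          ENNReal.rpow_le_rpow hmean (by positivity)
      _ ≤ (ENNReal.ofReal r ^ p) ^ p⁻¹ := ENNReal.rpow_le_rpow hIle (by positivity)
      _ = ENNReal.ofReal r := ENNReal.rpow_rpow_inv hp0.ne' _
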